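/- Let S be an n-simplex with vertices a_0, ..., a_n in R^d, and let C_0, ..., C_n be closed convex sets such that the facet of S opposite a_j is contained in C_j for each j, and S ⊆ C_0 ∪ ... ∪ C_n. Then ∩_{j=0}^n C_j ∩ S ≠ ∅. -/

import Mathlib

open Set

/-- IVT along a segment: a continuous linear functional attains an intermediate
value on the segment. -/
lemma exists_segment_eq {E : Type*} [NormedAddCommGroup E] [NormedSpace ℝ E]
    (a b : E) (f : E →L[ℝ] ℝ) (c : ℝ) (h1 : f a ≤ c) (h2 : c ≤ f b) :
    ∃ z ∈ segment ℝ a b, f z = c := by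
  have hg : Continuous fun t : ℝ => f (a + t • (b - a)) := by
    apply f.continuous.comp
    exact continuous_const.add (continuous_id.smul continuous_const)
  have h0 : (fun t : ℝ => f (a + t • (b - a))) 0 = f a := by simp
  have h1' : (fun t : ℝ => f (a + t • (b - a))) 1 = f b := by simp
  have hmem : c ∈ Icc ((fun t : ℝ => f (a + t • (b - a))) 0)
      ((fun t : ℝ => f (a + t • (b - a))) 1) := by
    rw [h0, h1']; exact ⟨h1, h2⟩
  have := intermediate_value_Icc (zero_le_one) hg.continuousOn hmem
  obtain ⟨t, ht, hft⟩ := this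
  refine ⟨a + t • (b - a), ?_, hft⟩
  rw [segment_eq_image']
  exact ⟨t, ht, rfl⟩

/-- **Berge's intersection theorem** (compact version): finitely many compact
convex sets whose union is convex and nonempty, such that every subfamily
omitting one set has a common point, have a common point. -/
lemma berge_inter {E : Type*} [NormedAddCommGroup E] [NormedSpace ℝ E] :
    ∀ (m : ℕ) (C : Fin (m + 1) → Set E),
      (∀ i, Convex ℝ (C i)) → (∀ i, IsCompact (C i)) →
      Convex ℝ (⋃ i, C i) → (⋃ i, C i).Nonempty →
      (∀ k, (⋂ i, ⋂ (_ : i ≠ k), C i).Nonempty) →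
      (⋂ i, C i).Nonempty := by
  intro m
  induction m with
  | zero =>
    intro C _ _ _ hne _
    obtain ⟨x, hx⟩ := hne
    simp only [mem_iUnion] at hx
    obtain ⟨i, hi⟩ := hx
    exact ⟨x, mem_iInter.2 fun j => by rwa [show j = i from Fin.ext (by omega)]⟩
  | succ m ih =>
    intro C hcv hcp hucv hune hk
    set A : Set E := ⋂ i : Fin (m + 1), C i.castSucc with hA
    have hAne : A.Nonempty := by
      obtain ⟨x, hx⟩ := hk (Fin.last (m + 1))
      simp only [mem_iInter] at hx
      exact ⟨x, mem_iInter.2 fun i => hx _ (Fin.ne_of_lt (Fin.castSucc_lt_last i))⟩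
    have hAcv : Convex ℝ A := convex_iInter fun i => hcv _
    have hAcp : IsCompact A := (hcp 0).of_isClosed_subset
      (isClosed_iInter fun i => (hcp _).isClosed)
      (iInter_subset (fun i : Fin (m+1) => C i.castSucc) 0)
    by_cases hAB : (A ∩ C (Fin.last (m + 1))).Nonempty
    · obtain ⟨x, hxA, hxB⟩ := hAB
      refine ⟨x, mem_iInter.2 fun j => ?_⟩
      rcases Fin.eq_castSucc_or_eq_last j with ⟨i, rfl⟩ | rfl
      · exact mem_iInter.1 hxA i
      · exact hxB
    · -- separate A from the last set
      have hdisj : Disjoint A (C (Fin.last (m + 1))) := by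
        rw [Set.disjoint_iff_inter_eq_empty]
        exact not_nonempty_iff_eq_empty.1 hAB
      obtain ⟨f, u, v, hfu, huv, hfv⟩ :=
        geometric_hahn_banach_compact_closed hAcv hAcp (hcv _) (hcp _).isClosed hdisj
      set c : ℝ := (u + v) / 2 with hc
      have huc : u < c := by simp [hc]; linarith
      have hcv' : c < v := by simp [hc]; linarith
      have hfA : ∀ x ∈ A, f x < c := fun x hx => lt_trans (hfu x hx) huc
      have hfB : ∀ x ∈ C (Fin.last (m + 1)), c < f x := fun x hx =>
        lt_trans hcv' (hfv x hx)
      set D : Fin (m + 1) → Set E := fun i => C i.castSucc ∩ {x | f x = c} with hD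
      have hHcl : IsClosed {x : E | f x = c} := isClosed_eq f.continuous continuous_const
      have hHcv : Convex ℝ {x : E | f x = c} := by
        have : {x : E | f x = c} = {x : E | f x ≤ c} ∩ {x : E | c ≤ f x} := by
          ext x; simp [le_antisymm_iff]
        rw [this]
        exact (convex_halfSpace_le f.isLinear c).inter (convex_halfSpace_ge f.isLinear c)
      -- union of D equals union of C intersected with the hyperplane
      have hUeq : (⋃ i, D i) = (⋃ j, C j) ∩ {x | f x = c} := by
        ext x
        simp only [hD, mem_iUnion, mem_inter_iff, mem_setOf_eq]
        constructor
        · rintro ⟨i, hxi, hfx⟩; exact ⟨⟨_, hxi⟩, hfx⟩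
        · rintro ⟨⟨j, hxj⟩, hfx⟩
          rcases Fin.eq_castSucc_or_eq_last j with ⟨i, rfl⟩ | rfl
          · exact ⟨i, hxj, hfx⟩
          · exact absurd hfx (ne_of_gt (hfB x hxj))
      -- nonemptiness of the union of D
      obtain ⟨p, hp⟩ := hAne
      obtain ⟨q, hq⟩ := (hk 0)
      have hqlast : q ∈ C (Fin.last (m + 1)) := by
        simp only [mem_iInter] at hq
        exact hq _ (Fin.ext_iff.not.2 (by simp))
      have hDune : (⋃ i, D i).Nonempty := by
        obtain ⟨z, hzseg, hzf⟩ :=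
          exists_segment_eq p q f c (le_of_lt (hfA p hp)) (le_of_lt (hfB q hqlast))
        refine ⟨z, ?_⟩
        rw [hUeq]
        refine ⟨hucv.segment_subset ?_ ?_ hzseg, hzf⟩
        · exact mem_iUnion.2 ⟨0, mem_iInter.1 hp 0⟩
        · exact mem_iUnion.2 ⟨_, hqlast⟩
      -- apply induction hypothesis to D
      have hres := ih D (fun i => (hcv _).inter hHcv)
        (fun i => (hcp _).inter_right hHcl)
        (by rw [hUeq]; exact hucv.inter hHcv) hDune ?_
      · obtain ⟨w, hw⟩ := hres
        simp only [mem_iInter, hD, mem_inter_iff, mem_setOf_eq] at hw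
        have hwA : w ∈ A := mem_iInter.2 fun i => (hw i).1
        exact absurd ((hw 0).2) (ne_of_lt (hfA w hwA))
      · -- (m)-wise intersections of D are nonempty
        intro k
        obtain ⟨x, hx⟩ := hk k.castSucc
        simp only [mem_iInter] at hx
        have hxlast : x ∈ C (Fin.last (m + 1)) :=
          hx _ (Fin.ne_of_gt (Fin.castSucc_lt_last k))
        obtain ⟨z, hzseg, hzf⟩ :=
          exists_segment_eq p x f c (le_of_lt (hfA p hp)) (le_of_lt (hfB x hxlast))
        refine ⟨z, mem_iInter₂.2 fun i hik => ?_⟩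
        refine ⟨(hcv i.castSucc).segment_subset (mem_iInter.1 hp i) ?_ hzseg, hzf⟩
        exact hx i.castSucc (fun h => hik (Fin.castSucc_injective _ h))

/-- KKM-type covering of a simplex: if each facet opposite a_j lies in the
closed convex set C_j and the simplex is covered by the C_j, then all C_j have
a common point inside the simplex. -/
theorem simplex_cover_common_point (d n : ℕ)
    (a : Fin (n + 1) → EuclideanSpace ℝ (Fin d))
    (haff : AffineIndependent ℝ a)
    (C : Fin (n + 1) → Set (EuclideanSpace ℝ (Fin d)))
    (hcl : ∀ j, IsClosed (C j)) (hcv : ∀ j, Convex ℝ (C j))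
    (hfacet : ∀ j, convexHull ℝ (a '' {i | i ≠ j}) ⊆ C j)
    (hcover : convexHull ℝ (Set.range a) ⊆ ⋃ j, C j) :
    ((⋂ j, C j) ∩ convexHull ℝ (Set.range a)).Nonempty := by
  set S : Set (EuclideanSpace ℝ (Fin d)) := convexHull ℝ (Set.range a) with hS
  have hSc : IsCompact S := (Set.finite_range a).isCompact_convexHull ℝ
  have hScv : Convex ℝ S := convex_convexHull ℝ _
  set D : Fin (n + 1) → Set (EuclideanSpace ℝ (Fin d)) := fun j => C j ∩ S with hDdef
  have hUeq : (⋃ j, D j) = S := by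
    apply Subset.antisymm
    · exact iUnion_subset fun j => inter_subset_right
    · intro x hx
      obtain ⟨j, hj⟩ := mem_iUnion.1 (hcover hx)
      exact mem_iUnion.2 ⟨j, hj, hx⟩
  have haS : ∀ k, a k ∈ S := fun k => subset_convexHull ℝ _ ⟨k, rfl⟩
  have hres := berge_inter n D (fun j => (hcv j).inter hScv)
    (fun j => hSc.inter_left (hcl j))
    (by rw [hUeq]; exact hScv)
    (by rw [hUeq]; exact ⟨a 0, haS 0⟩)
    (fun k => ⟨a k, mem_iInter₂.2 fun j hjk =>
      ⟨hfacet j (subset_convexHull ℝ _ ⟨k, fun h => hjk h.symm, rfl⟩), haS k⟩⟩)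
  obtain ⟨x, hx⟩ := hres
  simp only [mem_iInter, hDdef, mem_inter_iff] at hx
  exact ⟨x, mem_iInter.2 fun j => (hx j).1, (hx 0).2⟩
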